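/- Let φ : X → ℝ_{≥0} be a function on a finite set X of size N, and let n ≥ 2 be an integer. Then Σ_{x∈X} φ(x)^n ≤ N^{-(n-1)} (Σ_x φ(x))^n + (n(n-1)/2) · (max_x φ(x))^{n-2} · Σ_x (φ(x) − (Σ_y φ(y))/N)^2. -/

import Mathlib

lemma key_taylor (n : ℕ) (M a b : ℝ) (ha : 0 ≤ a) (hb : 0 ≤ b)
    (haM : a ≤ M) (hbM : b ≤ M) :
    a ^ (n + 2) ≤ b ^ (n + 2) + ((n : ℝ) + 2) * b ^ (n + 1) * (a - b)
      + (((n : ℝ) + 2) * ((n : ℝ) + 1) / 2) * M ^ n * (a - b) ^ 2 := by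
  induction n with
  | zero => nlinarith [sq_nonneg (a - b)]
  | succ m ih =>
    have hM : 0 ≤ M := le_trans ha haM
    have h1 : b ^ (m + 1) ≤ M ^ (m + 1) := pow_le_pow_left₀ hb hbM _
    have h2 : M ^ m * a ≤ M ^ (m + 1) := by
      rw [pow_succ]
      exact mul_le_mul_of_nonneg_left haM (pow_nonneg hM m)
    have h3 := mul_le_mul_of_nonneg_left ih ha
    push_cast
    have e1 : a ^ (m + 1 + 2) = a * a ^ (m + 2) := by ring
    have e2 : b ^ (m + 1 + 2) = b * b ^ (m + 2) := by ring
    have e3 : b ^ (m + 1 + 1) = b * b ^ (m + 1) := by ring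
    have e4 : M ^ (m + 1) = M * M ^ m := by ring
    have e5 : b ^ (m + 2) = b * b ^ (m + 1) := by ring
    rw [e4] at h1 h2
    rw [e1, e2, e3, e4]
    simp only [e5] at h3 ⊢
    have hm : (0:ℝ) ≤ (m:ℝ) := Nat.cast_nonneg m
    have hA : 0 ≤ (a - b) ^ 2 * (M * M ^ m - b ^ (m + 1)) :=
      mul_nonneg (sq_nonneg _) (by linarith)
    have hB : 0 ≤ (a - b) ^ 2 * (M * M ^ m - M ^ m * a) :=
      mul_nonneg (sq_nonneg _) (by linarith)
    nlinarith [h3, hA, hB, mul_nonneg hm hA, mul_nonneg hm hB,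
      mul_nonneg (mul_nonneg hm hm) hB, mul_nonneg (mul_nonneg hm hm) hA]

theorem stmt_5 (X : Type*) [Fintype X] [Nonempty X] (φ : X → ℝ)
    (hφ : ∀ x, 0 ≤ φ x) (n : ℕ) (hn : 2 ≤ n) :
    ∑ x, φ x ^ n ≤
      (∑ x, φ x) ^ n / (Fintype.card X : ℝ) ^ (n - 1)
      + ((n : ℝ) * ((n : ℝ) - 1) / 2) * (⨆ x, φ x) ^ (n - 2) *
        ∑ x, (φ x - (∑ y, φ y) / (Fintype.card X : ℝ)) ^ 2 := by
  obtain ⟨m, rfl⟩ : ∃ m, n = m + 2 := ⟨n - 2, by omega⟩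
  set N : ℝ := (Fintype.card X : ℝ) with hNdef
  set S : ℝ := ∑ x, φ x with hSdef
  set M : ℝ := ⨆ x, φ x with hMdef
  have hN : 0 < N := by
    rw [hNdef]; exact_mod_cast Fintype.card_pos
  have hle : ∀ x, φ x ≤ M := fun x => le_ciSup (Finite.bddAbove_range φ) x
  have hM0 : 0 ≤ M := le_trans (hφ (Classical.arbitrary X)) (hle _)
  have hS0 : 0 ≤ S := Finset.sum_nonneg fun x _ => hφ x
  have hμ0 : 0 ≤ S / N := div_nonneg hS0 hN.le
  have hSM : S ≤ N * M := by
    calc S ≤ ∑ _x : X, M := Finset.sum_le_sum fun x _ => hle x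
    _ = N * M := by rw [Finset.sum_const, Finset.card_univ, nsmul_eq_mul]
  have hμM : S / N ≤ M := (div_le_iff₀ hN).2 (by linarith [hSM])
  have key : ∀ x : X, φ x ^ (m + 2) ≤ (S / N) ^ (m + 2)
      + ((m : ℝ) + 2) * (S / N) ^ (m + 1) * (φ x - S / N)
      + (((m : ℝ) + 2) * ((m : ℝ) + 1) / 2) * M ^ m * (φ x - S / N) ^ 2 :=
    fun x => key_taylor m M (φ x) (S / N) (hφ x) hμ0 (hle x) hμM
  have hsum : ∑ x, (φ x - S / N) = 0 := by
    rw [Finset.sum_sub_distrib, Finset.sum_const, Finset.card_univ]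
    rw [nsmul_eq_mul, ← hNdef, mul_div_assoc', mul_div_right_comm, div_self hN.ne', one_mul, sub_self]
  have step := Finset.sum_le_sum (fun x (_ : x ∈ Finset.univ) => key x)
  have hexp : ((m + 2 : ℕ) : ℝ) * (((m + 2 : ℕ) : ℝ) - 1) / 2
      = ((m : ℝ) + 2) * ((m : ℝ) + 1) / 2 := by push_cast; ring
  have h1 : (m + 2) - 1 = m + 1 := rfl
  have h2 : (m + 2) - 2 = m := rfl
  rw [h1, h2, hexp]
  refine le_trans step ?_
  rw [Finset.sum_add_distrib, Finset.sum_add_distrib, ← Finset.mul_sum, ← Finset.mul_sum,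
    hsum, mul_zero, Finset.sum_const, Finset.card_univ]
  have hcard : ((Fintype.card X : ℕ) : ℝ) = N := rfl
  have : (Fintype.card X) • (S / N) ^ (m + 2) = S ^ (m + 2) / N ^ (m + 1) := by
    rw [nsmul_eq_mul, hcard]
    rw [div_pow, pow_succ N (m + 1), mul_comm (N ^ (m + 1)) N, ← div_div, mul_div_assoc', mul_div_assoc',
      mul_div_right_comm N, div_self hN.ne', one_mul]
  rw [this]
  simp
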